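/- If p > 1 and f : (0,∞) → [0,∞) is p-integrable, then ∫₀^∞ ( (1/x) ∫₀^x f(t) dt )^p dx ≤ (p/(p-1))^p ∫₀^∞ f(x)^p dx. -/

import Mathlib

open MeasureTheory Set
open scoped ENNReal NNReal

private lemma lint_rpow_Ioo {a x : ℝ} (ha : -1 < a) (hx : 0 < x) :
    ∫⁻ t in Ioo (0:ℝ) x, ENNReal.ofReal (t ^ a) = ENNReal.ofReal (x ^ (a+1) / (a+1)) := by
  rw [Measure.restrict_congr_set Ioo_ae_eq_Ioc]
  have hint : IntegrableOn (fun t : ℝ => t ^ a) (Ioc 0 x) := by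
    have h := intervalIntegral.intervalIntegrable_rpow' (a := 0) (b := x) ha
    rwa [intervalIntegrable_iff, uIoc_of_le hx.le] at h
  rw [← ofReal_integral_eq_lintegral_ofReal hint ?_]
  · congr 1
    rw [← intervalIntegral.integral_of_le hx.le, integral_rpow (Or.inl ha),
      Real.zero_rpow (by linarith : a + 1 ≠ 0), sub_zero]
  · filter_upwards [ae_restrict_mem measurableSet_Ioc] with t ht
    exact Real.rpow_nonneg ht.1.le a

private lemma lint_rpow_Ioi {b t : ℝ} (hb : b < -1) (ht : 0 < t) :
    ∫⁻ x in Ioi t, ENNReal.ofReal (x ^ b) = ENNReal.ofReal (-t ^ (b+1) / (b+1)) := by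
  rw [← ofReal_integral_eq_lintegral_ofReal (integrableOn_Ioi_rpow_of_lt hb ht) ?_,
    integral_Ioi_rpow_of_lt hb ht]
  filter_upwards [ae_restrict_mem measurableSet_Ioi] with x hx
  exact Real.rpow_nonneg (ht.trans hx).le b

theorem hardy_inequality (p : ℝ) (hp : 1 < p) (f : ℝ → ℝ)
    (hf_meas : Measurable f) (hf_nonneg : ∀ x ∈ Ioi (0:ℝ), 0 ≤ f x)
    (hf_int : IntegrableOn (fun x => f x ^ p) (Ioi (0:ℝ))) :
    ∫ x in Ioi (0:ℝ), ((1/x) * ∫ t in Ioo (0:ℝ) x, f t) ^ p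
      ≤ (p/(p-1)) ^ p * ∫ x in Ioi (0:ℝ), f x ^ p := by
  have hp0 : (0:ℝ) < p := by linarith
  have hp1 : (0:ℝ) < p - 1 := by linarith
  set q : ℝ := p / (p - 1) with hq
  have hpq : p.HolderConjugate q := Real.HolderConjugate.conjExponent hp
  have hq0 : (0:ℝ) < q := hpq.symm.pos
  set g : ℝ → ℝ≥0∞ := fun t => ENNReal.ofReal (f t) with hg
  have hgm : Measurable g := hf_meas.ennreal_ofReal
  set r : ℝ := (p-1)/(p*p) with hr
  have hr0 : (0:ℝ) < r := by positivity
  have hrp : r * p = (p-1)/p := by rw [hr]; field_simp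
  have hrq : r * q = 1/p := by rw [hr, hq]; field_simp
  have hc : (1:ℝ)/p - 2 < -1 := by
    have : 1/p < 1 := by rw [div_lt_one hp0]; exact hp
    linarith
  -- the function h and A
  set h : ℝ → ℝ≥0∞ := fun t => g t ^ p * ENNReal.ofReal (t ^ ((p-1)/p)) with hh
  have hhm : Measurable h :=
    (hgm.pow measurable_const).mul ((measurable_id.pow measurable_const)).ennreal_ofReal
  have hhfin : ∀ t : ℝ, h t ≠ ∞ :=
    fun t => ENNReal.mul_ne_top
      (ENNReal.rpow_lt_top_of_nonneg hp0.le ENNReal.ofReal_ne_top).ne ENNReal.ofReal_ne_top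
  set A : ℝ → ℝ≥0∞ := fun x => ∫⁻ t in Ioo (0:ℝ) x, h t with hA
  set Φ : ℝ → ℝ≥0∞ := fun x => ∫⁻ t in Ioo (0:ℝ) x, g t with hΦ
  have hΦmono : Monotone Φ := fun a b hab => lintegral_mono_set (Ioo_subset_Ioo le_rfl hab)
  have hΦmeas : Measurable Φ := hΦmono.measurable
  -- ∫⁻ g^p
  have hae_nonneg : ∀ᵐ t ∂(volume.restrict (Ioi (0:ℝ))), 0 ≤ f t := by
    filter_upwards [ae_restrict_mem measurableSet_Ioi] with t ht using hf_nonneg t ht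
  have hIp : ∫⁻ t in Ioi (0:ℝ), g t ^ p = ENNReal.ofReal (∫ x in Ioi (0:ℝ), f x ^ p) := by
    rw [ofReal_integral_eq_lintegral_ofReal hf_int ?_]
    · apply lintegral_congr_ae
      filter_upwards [hae_nonneg] with t ht
      exact ENNReal.ofReal_rpow_of_nonneg ht hp0.le
    · filter_upwards [hae_nonneg] with t ht using Real.rpow_nonneg ht p
  have hIfin : ∫⁻ t in Ioi (0:ℝ), g t ^ p ≠ ∞ := by rw [hIp]; exact ENNReal.ofReal_ne_top
  -- Φ is finite on Ioi 0
  have hΦfin : ∀ x : ℝ, 0 < x → Φ x ≠ ∞ := by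
    intro x hx
    have h1 := ENNReal.lintegral_mul_le_Lp_mul_Lq (volume.restrict (Ioo (0:ℝ) x)) hpq
      hgm.aemeasurable (aemeasurable_const (b := (1:ℝ≥0∞)))
    simp only [Pi.mul_apply, mul_one, ENNReal.one_rpow, lintegral_const,
      Measure.restrict_apply MeasurableSet.univ, univ_inter] at h1
    refine ne_top_of_le_ne_top ?_ h1
    apply ENNReal.mul_ne_top
    · refine (ENNReal.rpow_ne_top_of_nonneg (by positivity) ?_)
      exact ne_top_of_le_ne_top hIfin (lintegral_mono_set Ioo_subset_Ioi_self)
    · refine (ENNReal.rpow_ne_top_of_nonneg (by positivity) ?_)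
      simp [Real.volume_Ioo]
  -- the Bochner integral of f over (0,x) equals toReal of Φ
  have hF : ∀ x : ℝ, (∫ t in Ioo (0:ℝ) x, f t) = (Φ x).toReal := by
    intro x
    rw [integral_eq_lintegral_of_nonneg_ae ?_ hf_meas.aestronglyMeasurable]
    · filter_upwards [ae_restrict_mem measurableSet_Ioo] with t ht
      exact hf_nonneg t (mem_Ioi.mpr ht.1)
  have hofF : ∀ x : ℝ, 0 < x → ENNReal.ofReal (∫ t in Ioo (0:ℝ) x, f t) = Φ x := by
    intro x hx
    rw [hF x, ENNReal.ofReal_toReal (hΦfin x hx)]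
  -- pointwise Hoelder bound
  have key : ∀ x : ℝ, 0 < x →
      ENNReal.ofReal (x ^ (-p)) * Φ x ^ p ≤
        ENNReal.ofReal (q ^ (p-1)) * (ENNReal.ofReal (x ^ (1/p - 2)) * A x) := by
    intro x hx
    have hHolder : Φ x ≤ (A x) ^ (1/p) * (ENNReal.ofReal (x ^ ((p-1)/p) * q)) ^ (1/q) := by
      have h0 : Φ x = ∫⁻ t in Ioo (0:ℝ) x,
          ((fun t => g t * ENNReal.ofReal (t ^ r)) * fun t => ENNReal.ofReal (t ^ (-r))) t := by
        apply lintegral_congr_ae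
        filter_upwards [ae_restrict_mem measurableSet_Ioo] with t ht
        simp only [Pi.mul_apply]
        rw [mul_assoc, ← ENNReal.ofReal_mul (Real.rpow_nonneg ht.1.le r),
          ← Real.rpow_add ht.1, add_neg_cancel, Real.rpow_zero, ENNReal.ofReal_one, mul_one]
      rw [h0]
      have hm1 : Measurable fun t : ℝ => g t * ENNReal.ofReal (t ^ r) :=
        hgm.mul (measurable_id.pow measurable_const).ennreal_ofReal
      have hm2 : Measurable fun t : ℝ => ENNReal.ofReal (t ^ (-r)) :=
        (measurable_id.pow measurable_const).ennreal_ofReal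
      have h1 := ENNReal.lintegral_mul_le_Lp_mul_Lq (volume.restrict (Ioo (0:ℝ) x)) hpq
        (f := fun t : ℝ => g t * ENNReal.ofReal (t ^ r))
        (g := fun t : ℝ => ENNReal.ofReal (t ^ (-r)))
        hm1.aemeasurable hm2.aemeasurable
      refine h1.trans (le_of_eq ?_)
      congr 1
      · congr 1
        apply lintegral_congr_ae
        filter_upwards [ae_restrict_mem measurableSet_Ioo] with t ht
        rw [ENNReal.mul_rpow_of_nonneg _ _ hp0.le,
          ENNReal.ofReal_rpow_of_nonneg (Real.rpow_nonneg ht.1.le r) hp0.le,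
          ← Real.rpow_mul ht.1.le, hrp]
      · congr 1
        have h2 : ∫⁻ t in Ioo (0:ℝ) x, (ENNReal.ofReal (t ^ (-r))) ^ q
            = ∫⁻ t in Ioo (0:ℝ) x, ENNReal.ofReal (t ^ (-(1/p))) := by
          apply lintegral_congr_ae
          filter_upwards [ae_restrict_mem measurableSet_Ioo] with t ht
          rw [ENNReal.ofReal_rpow_of_nonneg (Real.rpow_nonneg ht.1.le _) hq0.le,
            ← Real.rpow_mul ht.1.le]
          congr 2
          rw [neg_mul, hrq]
        rw [h2, lint_rpow_Ioo (by linarith : (-1:ℝ) < -(1/p)) hx]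
        congr 1
        have he : -(1/p) + 1 = (p-1)/p := by field_simp; ring
        rw [he]
        rw [hq]
        field_simp
    have hxe : (0:ℝ) ≤ x ^ ((p-1)/p) := Real.rpow_nonneg hx.le _
    have h2 : Φ x ^ p ≤ A x * ENNReal.ofReal ((x ^ ((p-1)/p) * q) ^ (p-1)) := by
      have h3 := ENNReal.rpow_le_rpow hHolder hp0.le
      refine h3.trans (le_of_eq ?_)
      rw [ENNReal.mul_rpow_of_nonneg _ _ hp0.le, ← ENNReal.rpow_mul, ← ENNReal.rpow_mul,
        one_div_mul_cancel hp0.ne', ENNReal.rpow_one,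
        show (1/q) * p = p - 1 by rw [hq]; field_simp,
        ENNReal.ofReal_rpow_of_nonneg (mul_nonneg hxe hq0.le) hp1.le]
    calc ENNReal.ofReal (x ^ (-p)) * Φ x ^ p
        ≤ ENNReal.ofReal (x ^ (-p)) * (A x * ENNReal.ofReal ((x ^ ((p-1)/p) * q) ^ (p-1))) :=
          mul_le_mul_right h2 _
      _ = ENNReal.ofReal (q ^ (p-1)) * (ENNReal.ofReal (x ^ (1/p - 2)) * A x) := by
          have hreal : x ^ (-p) * (x ^ ((p-1)/p) * q) ^ (p-1) = q ^ (p-1) * x ^ (1/p - 2) := by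
            rw [Real.mul_rpow hxe hq0.le, ← Real.rpow_mul hx.le, mul_comm (x ^ ((p-1)/p*(p-1))),
              ← mul_assoc, mul_comm (x ^ (-p)), mul_assoc]
            congr 1
            rw [← Real.rpow_add hx]
            congr 1
            field_simp
            ring
          rw [mul_comm (A x), ← mul_assoc, ← ENNReal.ofReal_mul (Real.rpow_nonneg hx.le _), hreal,
            ENNReal.ofReal_mul (Real.rpow_nonneg hq0.le _), mul_assoc]
  -- integrate the pointwise bound
  have main : ∫⁻ x in Ioi (0:ℝ), ENNReal.ofReal (x ^ (-p)) * Φ x ^ p ≤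
      ENNReal.ofReal (q ^ (p-1)) * ∫⁻ x in Ioi (0:ℝ), ENNReal.ofReal (x ^ (1/p - 2)) * A x := by
    rw [← lintegral_const_mul' _ _ ENNReal.ofReal_ne_top]
    apply lintegral_mono_ae
    filter_upwards [ae_restrict_mem measurableSet_Ioi] with x hx using key x hx
  -- Tonelli
  set S : Set (ℝ × ℝ) := {z : ℝ × ℝ | 0 < z.2 ∧ z.2 < z.1} with hS
  have hSm : MeasurableSet S :=
    (measurableSet_lt measurable_const measurable_snd).inter
      (measurableSet_lt measurable_snd measurable_fst)
  set K : ℝ × ℝ → ℝ≥0∞ :=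
    S.indicator (fun z => ENNReal.ofReal (z.1 ^ (1/p - 2)) * h z.2) with hK
  have hKm : Measurable K :=
    Measurable.indicator
      ((measurable_fst.pow measurable_const).ennreal_ofReal.mul (hhm.comp measurable_snd)) hSm
  have hT1 : ∀ x : ℝ,
      (Ioi (0:ℝ)).indicator (fun x => ENNReal.ofReal (x ^ (1/p - 2)) * A x) x
        = ∫⁻ t, K (x, t) := by
    intro x
    by_cases hx : x ∈ Ioi (0:ℝ)
    · rw [indicator_of_mem hx]
      rw [hA]
      rw [← lintegral_const_mul' _ _ ENNReal.ofReal_ne_top,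
        ← lintegral_indicator measurableSet_Ioo]
      apply lintegral_congr
      intro t
      simp only [hK, hS, indicator_apply, mem_Ioo, mem_setOf_eq]
    · rw [indicator_of_notMem hx]
      simp only [mem_Ioi, not_lt] at hx
      have h0 : ∀ t : ℝ, K (x, t) = 0 := by
        intro t
        simp only [hK]
        exact indicator_of_notMem
          (fun hmem => absurd (hmem.1.trans hmem.2) (not_lt.mpr hx)) _
      simp [h0]
  have hT2 : ∀ t : ℝ,
      (∫⁻ x, K (x, t))
        = (Ioi (0:ℝ)).indicator
            (fun t => h t * ENNReal.ofReal (-t ^ ((1/p - 2)+1) / ((1/p - 2)+1))) t := by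
    intro t
    by_cases ht : t ∈ Ioi (0:ℝ)
    · rw [indicator_of_mem ht]
      have ht' : (0:ℝ) < t := ht
      have hKt : ∀ x : ℝ, K (x, t)
          = (Ioi t).indicator (fun x => ENNReal.ofReal (x ^ (1/p - 2)) * h t) x := by
        intro x
        simp only [hK, hS, indicator_apply, mem_setOf_eq, mem_Ioi, ht', true_and]
      simp only [hKt]
      rw [lintegral_indicator measurableSet_Ioi, lintegral_mul_const' _ _ (hhfin t),
        lint_rpow_Ioi hc ht', mul_comm]
    · rw [indicator_of_notMem ht]
      simp only [mem_Ioi, not_lt] at ht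
      have h0 : ∀ x : ℝ, K (x, t) = 0 := by
        intro x
        simp only [hK]
        exact indicator_of_notMem (fun hmem => absurd hmem.1 (not_lt.mpr ht)) _
      simp [h0]
  have hT3 : ∀ t : ℝ, t ∈ Ioi (0:ℝ) →
      h t * ENNReal.ofReal (-t ^ ((1/p - 2)+1) / ((1/p - 2)+1)) = ENNReal.ofReal q * g t ^ p := by
    intro t ht
    have ht' : (0:ℝ) < t := ht
    have h1 : -t ^ ((1/p - 2)+1) / ((1/p - 2)+1) = q * t ^ ((1-p)/p) := by
      rw [show (1:ℝ)/p - 2 + 1 = (1-p)/p by field_simp; ring, hq]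
      have h1p : (1:ℝ) - p ≠ 0 := by intro hcon; linarith
      field_simp
      ring
    rw [h1, ENNReal.ofReal_mul hq0.le]
    simp only [hh]
    rw [mul_comm (ENNReal.ofReal q), ← mul_assoc, mul_assoc (g t ^ p),
      ← ENNReal.ofReal_mul (Real.rpow_nonneg ht'.le _), ← Real.rpow_add ht',
      show (p-1)/p + (1-p)/p = 0 by ring, Real.rpow_zero, ENNReal.ofReal_one, mul_one, mul_comm]
  have hTon : ∫⁻ x in Ioi (0:ℝ), ENNReal.ofReal (x ^ (1/p - 2)) * A x
      = ENNReal.ofReal q * ∫⁻ t in Ioi (0:ℝ), g t ^ p := by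
    rw [← lintegral_indicator measurableSet_Ioi]
    calc ∫⁻ x, (Ioi (0:ℝ)).indicator (fun x => ENNReal.ofReal (x ^ (1/p - 2)) * A x) x
        = ∫⁻ x, ∫⁻ t, K (x, t) := lintegral_congr hT1
      _ = ∫⁻ t, ∫⁻ x, K (x, t) := by
          have huncurry : Function.uncurry (fun x t : ℝ => K (x, t)) = K := by
            ext ⟨a, b⟩; rfl
          exact lintegral_lintegral_swap (by rw [huncurry]; exact hKm.aemeasurable)
      _ = ∫⁻ t, (Ioi (0:ℝ)).indicator
            (fun t => h t * ENNReal.ofReal (-t ^ ((1/p - 2)+1) / ((1/p - 2)+1))) t :=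
          lintegral_congr hT2
      _ = ∫⁻ t in Ioi (0:ℝ), h t * ENNReal.ofReal (-t ^ ((1/p - 2)+1) / ((1/p - 2)+1)) :=
          lintegral_indicator measurableSet_Ioi _
      _ = ∫⁻ t in Ioi (0:ℝ), ENNReal.ofReal q * g t ^ p := by
          apply lintegral_congr_ae
          filter_upwards [ae_restrict_mem measurableSet_Ioi] with t ht using hT3 t ht
      _ = ENNReal.ofReal q * ∫⁻ t in Ioi (0:ℝ), g t ^ p :=
          lintegral_const_mul' _ _ ENNReal.ofReal_ne_top
  have hfinal : ∫⁻ x in Ioi (0:ℝ), ENNReal.ofReal (x ^ (-p)) * Φ x ^ p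
      ≤ ENNReal.ofReal ((p/(p-1)) ^ p) * ∫⁻ t in Ioi (0:ℝ), g t ^ p := by
    refine main.trans (le_of_eq ?_)
    rw [hTon, ← mul_assoc, ← ENNReal.ofReal_mul (Real.rpow_nonneg hq0.le _)]
    congr 2
    nth_rewrite 2 [← Real.rpow_one q]
    rw [← Real.rpow_add hq0, show p - 1 + 1 = p by ring]
  -- convert to Bochner integrals
  have hFm : Measurable fun x : ℝ => ∫ t in Ioo (0:ℝ) x, f t := by
    simp only [hF]
    exact ENNReal.measurable_toReal.comp hΦmeas
  have hFmeas : Measurable fun x : ℝ => ((1/x) * ∫ t in Ioo (0:ℝ) x, f t) ^ p :=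
    ((measurable_const.div measurable_id).mul hFm).pow measurable_const
  have hLHS : ∫ x in Ioi (0:ℝ), ((1/x) * ∫ t in Ioo (0:ℝ) x, f t) ^ p
      = (∫⁻ x in Ioi (0:ℝ), ENNReal.ofReal (x ^ (-p)) * Φ x ^ p).toReal := by
    rw [integral_eq_lintegral_of_nonneg_ae ?_ hFmeas.aestronglyMeasurable]
    · congr 1
      apply lintegral_congr_ae
      filter_upwards [ae_restrict_mem measurableSet_Ioi] with x hx
      have hx' : (0:ℝ) < x := hx
      have hxF : (0:ℝ) ≤ ∫ t in Ioo (0:ℝ) x, f t := by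
        rw [hF]; exact ENNReal.toReal_nonneg
      rw [Real.mul_rpow (le_of_lt (one_div_pos.mpr hx')) hxF,
        ENNReal.ofReal_mul (Real.rpow_nonneg (le_of_lt (one_div_pos.mpr hx')) p),
        ← ENNReal.ofReal_rpow_of_nonneg hxF hp0.le, hofF x hx',
        one_div, Real.inv_rpow hx'.le p, ← Real.rpow_neg hx'.le]
    · filter_upwards [ae_restrict_mem measurableSet_Ioi] with x hx
      have hx' : (0:ℝ) < x := hx
      have hxF : (0:ℝ) ≤ ∫ t in Ioo (0:ℝ) x, f t := by
        rw [hF]; exact ENNReal.toReal_nonneg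
      exact Real.rpow_nonneg (mul_nonneg (le_of_lt (one_div_pos.mpr hx')) hxF) p
  have hInt_nonneg : (0:ℝ) ≤ ∫ x in Ioi (0:ℝ), f x ^ p := by
    apply integral_nonneg_of_ae
    filter_upwards [hae_nonneg] with t ht using Real.rpow_nonneg ht p
  have hRHS : (p/(p-1)) ^ p * ∫ x in Ioi (0:ℝ), f x ^ p
      = (ENNReal.ofReal ((p/(p-1)) ^ p) * ∫⁻ t in Ioi (0:ℝ), g t ^ p).toReal := by
    rw [hIp, ← ENNReal.ofReal_mul (Real.rpow_nonneg (div_nonneg hp0.le hp1.le) p),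
      ENNReal.toReal_ofReal (mul_nonneg (Real.rpow_nonneg (div_nonneg hp0.le hp1.le) p)
        hInt_nonneg)]
  rw [hLHS, hRHS]
  exact ENNReal.toReal_mono (ENNReal.mul_ne_top ENNReal.ofReal_ne_top hIfin) hfinal
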